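/- Let M > 0 and λ ≥ 0, let u : ℝ × ℝ → ℝ be smooth on ℝ × (2M,∞), and define V(τ̄,ρ̄) = (1/ρ̄)·u(τ̄ + r_*(1/ρ̄), 1/ρ̄) for τ̄ ∈ ℝ and ρ̄ ∈ (0, 1/(2M)). Then u is a λ-mode solution (i.e., it satisfies the λ-mode Schwarzschild wave equation at every point of ℝ × (2M,∞)) if and only if V satisfies the conformally transformed equation 2·∂_τ̄∂_ρ̄ V + (1−2Mρ̄)·(ρ̄²·∂²_ρ̄ V + ρ̄·∂_ρ̄ V) + (1−4Mρ̄)·ρ̄·∂_ρ̄ V − λ²·V − 2M·ρ̄·V = 0 at every point of ℝ × (0, 1/(2M)). (The conformal transformation □_S u = 0 ⇔ (□̃_∞ + γ_∞)ũ = 0 with ũ = ρ̄^{−1}u and γ_∞ = −2Mρ̄, stated for a single spherical-harmonic mode.) -/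

import Mathlib

open MeasureTheory Filter Set Function
open scoped ContDiff

/-- The tortoise coordinate `r_* = r + 2M log(r - 2M)`. -/
noncomputable def rstar (M r : ℝ) : ℝ := r + 2*M*Real.log (r - 2*M)

/-- Partial derivative of `u` in the first (time) variable. -/
noncomputable def pdt (u : ℝ → ℝ → ℝ) (t r : ℝ) : ℝ := deriv (fun s => u s r) t

/-- Second partial derivative of `u` in the first (time) variable. -/
noncomputable def pdtt (u : ℝ → ℝ → ℝ) (t r : ℝ) : ℝ := deriv (fun s => pdt u s r) t

/-- Partial derivative of `u` in the second (radial) variable. -/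
noncomputable def pdr (u : ℝ → ℝ → ℝ) (t r : ℝ) : ℝ := deriv (fun s => u t s) r

/-- Second partial derivative of `u` in the second (radial) variable. -/
noncomputable def pdrr (u : ℝ → ℝ → ℝ) (t r : ℝ) : ℝ := deriv (fun s => pdr u t s) r

/-- `u(t,r)` is a λ-mode solution of the wave equation on the mass-`M`
Schwarzschild exterior: it is smooth on `ℝ × (2M,∞)` and satisfies
`−(r/(r−2M))·∂²ₜu + ((r−2M)/r)·∂²ᵣu + (2(r−M)/r²)·∂ᵣu − (λ²/r²)·u = 0` there. -/
def IsModeSolution (M lam : ℝ) (u : ℝ → ℝ → ℝ) : Prop :=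
  ContDiffOn ℝ ∞ (Function.uncurry u) ((Set.univ : Set ℝ) ×ˢ Set.Ioi (2*M)) ∧
  ∀ t r : ℝ, 2*M < r →
    -(r/(r-2*M)) * pdtt u t r + ((r-2*M)/r) * pdrr u t r
      + (2*(r-M)/r^2) * pdr u t r - lam^2/r^2 * u t r = 0

/-- The rescaled solution near null infinity in the outgoing Eddington–Finkelstein
coordinates `τ̄ = t − r_*(r)`, `ρ̄ = 1/r`: `V(τ̄,ρ̄) = (1/ρ̄)·u(τ̄ + r_*(1/ρ̄), 1/ρ̄)`. -/
noncomputable def nullV (M : ℝ) (u : ℝ → ℝ → ℝ) (τ ρ : ℝ) : ℝ :=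
  (1/ρ) * u (τ + rstar M (1/ρ)) (1/ρ)

/-- The λ-mode wave equation in outgoing coordinates near null infinity, at the point
`(τ̄,ρ̄)`:
`2·∂_τ̄∂_ρ̄ v + (1−2Mρ̄)·(ρ̄²·∂²_ρ̄ v + ρ̄·∂_ρ̄ v) + (1−4Mρ̄)·ρ̄·∂_ρ̄ v − λ²·v − 2Mρ̄·v = 0`. -/
def NullInftyEqAt (M lam : ℝ) (v : ℝ → ℝ → ℝ) (τ ρ : ℝ) : Prop :=
  2 * deriv (fun s => deriv (fun p => v s p) ρ) τ
    + (1 - 2*M*ρ) * (ρ^2 * deriv (fun p => deriv (fun q => v τ q) p) ρ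
        + ρ * deriv (fun p => v τ p) ρ)
    + (1 - 4*M*ρ) * ρ * deriv (fun p => v τ p) ρ
    - lam^2 * v τ ρ - 2*M*ρ * v τ ρ = 0

section AuxCE

lemma clm_eval (L : ℝ × ℝ →L[ℝ] ℝ) (a b : ℝ) :
    L (a, b) = a * L (1, 0) + b * L (0, 1) := by
  have h : (a, b) = a • ((1:ℝ), (0:ℝ)) + b • ((0:ℝ), (1:ℝ)) := by simp [Prod.ext_iff]
  rw [h, map_add, _root_.map_smul, _root_.map_smul, smul_eq_mul, smul_eq_mul]

lemma clm_eval2 (L : ℝ × ℝ →L[ℝ] (ℝ × ℝ →L[ℝ] ℝ)) (a b : ℝ) (w : ℝ × ℝ) :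
    L (a, b) w = a * L (1, 0) w + b * L (0, 1) w := by
  have h : (a, b) = a • ((1:ℝ), (0:ℝ)) + b • ((0:ℝ), (1:ℝ)) := by simp [Prod.ext_iff]
  rw [h]
  simp only [map_add, _root_.map_smul, ContinuousLinearMap.add_apply, ContinuousLinearMap.smul_apply,
    smul_eq_mul]

variable {M : ℝ} {f : ℝ × ℝ → ℝ}

lemma hasDerivAt_rstar (M : ℝ) {y : ℝ} (hy : 2*M < y) :
    HasDerivAt (rstar M) (1 + 2*M * (y - 2*M)⁻¹) y := by
  have h0 : y - 2*M ≠ 0 := sub_ne_zero.mpr (ne_of_gt hy)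
  have h1 : HasDerivAt (fun z : ℝ => z - 2*M) 1 y := (hasDerivAt_id y).sub_const _
  have h2 : HasDerivAt (fun z : ℝ => Real.log (z - 2*M)) (1 / (y - 2*M)) y := h1.log h0
  have h3 := (hasDerivAt_id y).add (h2.const_mul (2*M))
  have : 1 + 2*M * (1 / (y - 2*M)) = 1 + 2*M * (y - 2*M)⁻¹ := by rw [one_div]
  rw [← this]
  exact h3

lemma contDiffAt_of_mem (hf : ContDiffOn ℝ ∞ f ((Set.univ : Set ℝ) ×ˢ Set.Ioi (2*M)))
    {x : ℝ × ℝ} (hx : 2*M < x.2) : ContDiffAt ℝ ∞ f x :=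
  hf.contDiffAt ((isOpen_univ.prod isOpen_Ioi).mem_nhds ⟨mem_univ _, hx⟩)

lemma hasFDerivAt_of_mem (hf : ContDiffOn ℝ ∞ f ((Set.univ : Set ℝ) ×ˢ Set.Ioi (2*M)))
    {x : ℝ × ℝ} (hx : 2*M < x.2) : HasFDerivAt f (fderiv ℝ f x) x :=
  ((contDiffAt_of_mem hf hx).differentiableAt (by simp)).hasFDerivAt

lemma hasFDerivAt_fderiv_of_mem (hf : ContDiffOn ℝ ∞ f ((Set.univ : Set ℝ) ×ˢ Set.Ioi (2*M)))
    {x : ℝ × ℝ} (hx : 2*M < x.2) :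
    HasFDerivAt (fderiv ℝ f) (fderiv ℝ (fderiv ℝ f) x) x :=
  ((((contDiffAt_of_mem hf hx).fderiv_right (m := 1) (WithTop.coe_le_coe.mpr le_top)).differentiableAt
    one_ne_zero)).hasFDerivAt

lemma hasFDerivAt_partial_of_mem (hf : ContDiffOn ℝ ∞ f ((Set.univ : Set ℝ) ×ˢ Set.Ioi (2*M)))
    {x : ℝ × ℝ} (hx : 2*M < x.2) (v : ℝ × ℝ) :
    HasFDerivAt (fun y => fderiv ℝ f y v)
      ((ContinuousLinearMap.apply ℝ ℝ v).comp (fderiv ℝ (fderiv ℝ f) x)) x :=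
  (ContinuousLinearMap.apply ℝ ℝ v).hasFDerivAt.comp x (hasFDerivAt_fderiv_of_mem hf hx)

lemma symm_snd_of_mem (hf : ContDiffOn ℝ ∞ f ((Set.univ : Set ℝ) ×ˢ Set.Ioi (2*M)))
    {x : ℝ × ℝ} (hx : 2*M < x.2) (v w : ℝ × ℝ) :
    fderiv ℝ (fderiv ℝ f) x v w = fderiv ℝ (fderiv ℝ f) x w v :=
  ((contDiffAt_of_mem hf hx).isSymmSndFDerivAt (by simp; exact WithTop.coe_le_coe.mpr le_top)) v w

end AuxCE

section Curve

variable {M : ℝ} {f : ℝ × ℝ → ℝ}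

lemma inv_mem_Ioi {M p : ℝ} (hM : 0 < M) (hp : p ∈ Set.Ioo 0 (1/(2*M))) : 2*M < p⁻¹ := by
  have h2M : 0 < 2*M := by linarith
  have h1 : 2*M*p < 1 := by
    have h := hp.2
    rw [lt_div_iff₀ h2M] at h
    nlinarith
  rw [← one_div]
  exact (lt_div_iff₀ hp.1).mpr (by linarith)

/-- the curve `q ↦ (s + r_*(1/q), 1/q)` has derivative `(c₁ p, c₂ p)` -/
lemma hasDerivAt_curve (hM : 0 < M) (s : ℝ) {p : ℝ} (hp : p ∈ Set.Ioo 0 (1/(2*M))) :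
    HasDerivAt (fun q : ℝ => (s + rstar M q⁻¹, q⁻¹))
      (((1 + 2*M * (p⁻¹ - 2*M)⁻¹) * -(p^2)⁻¹, -(p^2)⁻¹)) p := by
  have hI : HasDerivAt (fun q : ℝ => q⁻¹) (-(p^2)⁻¹) p := hasDerivAt_inv (ne_of_gt hp.1)
  have hrs : HasDerivAt (fun q : ℝ => rstar M q⁻¹) ((1 + 2*M * (p⁻¹ - 2*M)⁻¹) * -(p^2)⁻¹) p :=
    (hasDerivAt_rstar M (inv_mem_Ioi hM hp)).comp p hI
  exact (hrs.const_add s).prodMk hI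

lemma hasDerivAt_f_curve (hM : 0 < M)
    (hf : ContDiffOn ℝ ∞ f ((Set.univ : Set ℝ) ×ˢ Set.Ioi (2*M)))
    (s : ℝ) {p : ℝ} (hp : p ∈ Set.Ioo 0 (1/(2*M))) :
    HasDerivAt (fun q : ℝ => f (s + rstar M q⁻¹, q⁻¹))
      ((1 + 2*M * (p⁻¹ - 2*M)⁻¹) * -(p^2)⁻¹ * fderiv ℝ f (s + rstar M p⁻¹, p⁻¹) (1, 0)
        + -(p^2)⁻¹ * fderiv ℝ f (s + rstar M p⁻¹, p⁻¹) (0, 1)) p := by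
  have hx : 2*M < ((s + rstar M p⁻¹, p⁻¹) : ℝ × ℝ).2 := inv_mem_Ioi hM hp
  have h := (hasFDerivAt_of_mem hf hx).comp_hasDerivAt p (hasDerivAt_curve hM s hp)
  rw [clm_eval] at h
  exact h

lemma hasDerivAt_partial_curve (hM : 0 < M)
    (hf : ContDiffOn ℝ ∞ f ((Set.univ : Set ℝ) ×ˢ Set.Ioi (2*M)))
    (s : ℝ) {p : ℝ} (hp : p ∈ Set.Ioo 0 (1/(2*M))) (v : ℝ × ℝ) :
    HasDerivAt (fun q : ℝ => fderiv ℝ f (s + rstar M q⁻¹, q⁻¹) v)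
      ((1 + 2*M * (p⁻¹ - 2*M)⁻¹) * -(p^2)⁻¹
          * fderiv ℝ (fderiv ℝ f) (s + rstar M p⁻¹, p⁻¹) (1, 0) v
        + -(p^2)⁻¹ * fderiv ℝ (fderiv ℝ f) (s + rstar M p⁻¹, p⁻¹) (0, 1) v) p := by
  have hx : 2*M < ((s + rstar M p⁻¹, p⁻¹) : ℝ × ℝ).2 := inv_mem_Ioi hM hp
  have h := (hasFDerivAt_partial_of_mem hf hx v).comp_hasDerivAt p (hasDerivAt_curve hM s hp)
  have h2 : ((ContinuousLinearMap.apply ℝ ℝ v).comp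
      (fderiv ℝ (fderiv ℝ f) (s + rstar M p⁻¹, p⁻¹)))
        (((1 + 2*M * (p⁻¹ - 2*M)⁻¹) * -(p^2)⁻¹, -(p^2)⁻¹)) =
      (1 + 2*M * (p⁻¹ - 2*M)⁻¹) * -(p^2)⁻¹
          * fderiv ℝ (fderiv ℝ f) (s + rstar M p⁻¹, p⁻¹) (1, 0) v
        + -(p^2)⁻¹ * fderiv ℝ (fderiv ℝ f) (s + rstar M p⁻¹, p⁻¹) (0, 1) v := by
    rw [ContinuousLinearMap.comp_apply]
    exact clm_eval2 _ _ _ v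
  rw [h2] at h
  exact h

end Curve

section VR

variable {M : ℝ} {f : ℝ × ℝ → ℝ}

/-- The value of `∂ρ V` in terms of the fderivs of `f`. -/
noncomputable def vr (M : ℝ) (f : ℝ × ℝ → ℝ) (s p : ℝ) : ℝ :=
  -(p^2)⁻¹ * f (s + rstar M p⁻¹, p⁻¹) +
    p⁻¹ * ((1 + 2*M * (p⁻¹ - 2*M)⁻¹) * -(p^2)⁻¹ * fderiv ℝ f (s + rstar M p⁻¹, p⁻¹) (1, 0)
      + -(p^2)⁻¹ * fderiv ℝ f (s + rstar M p⁻¹, p⁻¹) (0, 1))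

lemma hasDerivAt_V (hM : 0 < M)
    (hf : ContDiffOn ℝ ∞ f ((Set.univ : Set ℝ) ×ˢ Set.Ioi (2*M)))
    (s : ℝ) {p : ℝ} (hp : p ∈ Set.Ioo 0 (1/(2*M))) :
    HasDerivAt (fun q : ℝ => (1/q) * f (s + rstar M (1/q), 1/q)) (vr M f s p) p := by
  simp only [one_div]
  have hI : HasDerivAt (fun q : ℝ => q⁻¹) (-(p^2)⁻¹) p := hasDerivAt_inv (ne_of_gt hp.1)
  exact hI.mul (hasDerivAt_f_curve hM hf s hp)

end VR

section VRR

variable {M : ℝ} {f : ℝ × ℝ → ℝ}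

set_option maxHeartbeats 1000000 in
lemma deriv_vr (hM : 0 < M)
    (hf : ContDiffOn ℝ ∞ f ((Set.univ : Set ℝ) ×ˢ Set.Ioi (2*M)))
    (s : ℝ) {p : ℝ} (hp : p ∈ Set.Ioo 0 (1/(2*M))) :
    deriv (fun q : ℝ => vr M f s q) p =
      2*p⁻¹^3 * f (s + rstar M p⁻¹, p⁻¹)
      + 2*p⁻¹^5*(2*p⁻¹ - 5*M)/(p⁻¹-2*M)^2 * fderiv ℝ f (s + rstar M p⁻¹, p⁻¹) (1, 0)
      + 4*p⁻¹^4 * fderiv ℝ f (s + rstar M p⁻¹, p⁻¹) (0, 1)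
      + p⁻¹^7/(p⁻¹-2*M)^2 * fderiv ℝ (fderiv ℝ f) (s + rstar M p⁻¹, p⁻¹) (1, 0) (1, 0)
      + p⁻¹^6/(p⁻¹-2*M) * fderiv ℝ (fderiv ℝ f) (s + rstar M p⁻¹, p⁻¹) (0, 1) (1, 0)
      + p⁻¹^6/(p⁻¹-2*M) * fderiv ℝ (fderiv ℝ f) (s + rstar M p⁻¹, p⁻¹) (1, 0) (0, 1)
      + p⁻¹^5 * fderiv ℝ (fderiv ℝ f) (s + rstar M p⁻¹, p⁻¹) (0, 1) (0, 1) := by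
  have hp0 : p ≠ 0 := ne_of_gt hp.1
  have hD : 2*M < p⁻¹ := inv_mem_Ioi hM hp
  have hD0 : p⁻¹ - 2*M ≠ 0 := sub_ne_zero.mpr (ne_of_gt hD)
  have hI : HasDerivAt (fun q : ℝ => q⁻¹) (-(p^2)⁻¹) p := hasDerivAt_inv hp0
  have hC : HasDerivAt (fun q : ℝ => -(q^2)⁻¹) (-(-(↑(2:ℕ) * p ^ (2-1)) / (p^2)^2)) p :=
    ((hasDerivAt_pow 2 p).inv (pow_ne_zero 2 hp0)).neg
  have hc1 := (((hI.sub_const (2*M)).inv hD0).const_mul (2*M)).const_add 1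
  have hfX := hasDerivAt_f_curve hM hf s hp
  have hg1X := hasDerivAt_partial_curve hM hf s hp ((1:ℝ), (0:ℝ))
  have hg2X := hasDerivAt_partial_curve hM hf s hp ((0:ℝ), (1:ℝ))
  have hB := (hC.mul hfX).add (hI.mul (((hc1.mul hC).mul hg1X).add (hC.mul hg2X)))
  have h2 : (1:ℝ) - p*M*2 ≠ 0 := by
    have : 2*M*p < 1 := by
      have h := hp.2
      rw [lt_div_iff₀ (by linarith : (0:ℝ) < 2*M)] at h
      nlinarith
    intro hc; nlinarith
  simp only [vr]
  refine hB.deriv.trans ?_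
  simp only [Pi.mul_apply, Pi.add_apply, Pi.inv_apply]
  set X : ℝ × ℝ := (s + rstar M p⁻¹, p⁻¹) with hX
  set u0 := f X
  set a1 := fderiv ℝ f X (1, 0)
  set a2 := fderiv ℝ f X (0, 1)
  set b11 := fderiv ℝ (fderiv ℝ f) X (1, 0) (1, 0)
  set b12 := fderiv ℝ (fderiv ℝ f) X (0, 1) (1, 0)
  set b21 := fderiv ℝ (fderiv ℝ f) X (1, 0) (0, 1)
  set b22 := fderiv ℝ (fderiv ℝ f) X (0, 1) (0, 1)
  have hrw : p⁻¹ - 2*M = (1 - p*M*2)/p := by field_simp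
  generalize hd : p⁻¹ - 2*M = d at hD0 ⊢
  have hMd : M = (p⁻¹ - d)/2 := by linarith
  subst hMd
  field_simp
  ring

end VRR

section TauPd

variable {M : ℝ} {f : ℝ × ℝ → ℝ}

lemma deriv_vr_tau (hM : 0 < M)
    (hf : ContDiffOn ℝ ∞ f ((Set.univ : Set ℝ) ×ˢ Set.Ioi (2*M)))
    (τ : ℝ) {ρ : ℝ} (hρ : ρ ∈ Set.Ioo 0 (1/(2*M))) :
    deriv (fun s : ℝ => vr M f s ρ) τ =
      -(ρ⁻¹^2) * fderiv ℝ f (τ + rstar M ρ⁻¹, ρ⁻¹) (1, 0)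
      - ρ⁻¹^4/(ρ⁻¹-2*M) * fderiv ℝ (fderiv ℝ f) (τ + rstar M ρ⁻¹, ρ⁻¹) (1, 0) (1, 0)
      - ρ⁻¹^3 * fderiv ℝ (fderiv ℝ f) (τ + rstar M ρ⁻¹, ρ⁻¹) (1, 0) (0, 1) := by
  have hρ0 : ρ ≠ 0 := ne_of_gt hρ.1
  have hD : 2*M < ρ⁻¹ := inv_mem_Ioi hM hρ
  have hD0 : ρ⁻¹ - 2*M ≠ 0 := sub_ne_zero.mpr (ne_of_gt hD)
  have hx : 2*M < ((τ + rstar M ρ⁻¹, ρ⁻¹) : ℝ × ℝ).2 := hD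
  have hcτ : HasDerivAt (fun s : ℝ => (s + rstar M ρ⁻¹, ρ⁻¹)) (((1:ℝ), (0:ℝ))) τ :=
    ((hasDerivAt_id τ).add_const _).prodMk (hasDerivAt_const τ _)
  have hτf : HasDerivAt (fun s : ℝ => f (s + rstar M ρ⁻¹, ρ⁻¹))
      (fderiv ℝ f (τ + rstar M ρ⁻¹, ρ⁻¹) (1, 0)) τ :=
    (hasFDerivAt_of_mem hf hx).comp_hasDerivAt τ hcτ
  have hτg1 : HasDerivAt (fun s : ℝ => fderiv ℝ f (s + rstar M ρ⁻¹, ρ⁻¹) (1, 0))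
      (fderiv ℝ (fderiv ℝ f) (τ + rstar M ρ⁻¹, ρ⁻¹) (1, 0) (1, 0)) τ :=
    by have h := (hasFDerivAt_partial_of_mem hf hx ((1:ℝ), (0:ℝ))).comp_hasDerivAt τ hcτ; exact h
  have hτg2 : HasDerivAt (fun s : ℝ => fderiv ℝ f (s + rstar M ρ⁻¹, ρ⁻¹) (0, 1))
      (fderiv ℝ (fderiv ℝ f) (τ + rstar M ρ⁻¹, ρ⁻¹) (1, 0) (0, 1)) τ :=
    by have h := (hasFDerivAt_partial_of_mem hf hx ((0:ℝ), (1:ℝ))).comp_hasDerivAt τ hcτ; exact h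
  have hT := (hτf.const_mul (-(ρ^2)⁻¹)).add
    (((hτg1.const_mul ((1 + 2*M * (ρ⁻¹ - 2*M)⁻¹) * -(ρ^2)⁻¹)).add
      (hτg2.const_mul (-(ρ^2)⁻¹))).const_mul ρ⁻¹)
  simp only [vr]
  refine hT.deriv.trans ?_
  set X : ℝ × ℝ := (τ + rstar M ρ⁻¹, ρ⁻¹) with hX
  set a1 := fderiv ℝ f X (1, 0)
  set b11 := fderiv ℝ (fderiv ℝ f) X (1, 0) (1, 0)
  set b21 := fderiv ℝ (fderiv ℝ f) X (1, 0) (0, 1)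
  have h2 : (1:ℝ) - ρ*M*2 ≠ 0 := by
    have : 2*M*ρ < 1 := by
      have h := hρ.2
      rw [lt_div_iff₀ (by linarith : (0:ℝ) < 2*M)] at h
      nlinarith
    intro hc; nlinarith
  have hrw : ρ⁻¹ - 2*M = (1 - ρ*M*2)/ρ := by field_simp
  generalize hd : ρ⁻¹ - 2*M = d at hD0 ⊢
  have hMd : M = (ρ⁻¹ - d)/2 := by linarith
  subst hMd
  field_simp
  ring

lemma pdt_eq {u : ℝ → ℝ → ℝ}
    (hf : ContDiffOn ℝ ∞ (Function.uncurry u) ((Set.univ : Set ℝ) ×ˢ Set.Ioi (2*M)))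
    {t r : ℝ} (hr : 2*M < r) :
    pdt u t r = fderiv ℝ (Function.uncurry u) (t, r) (1, 0) := by
  have hc : HasDerivAt (fun s : ℝ => ((s, r) : ℝ × ℝ)) (((1:ℝ), (0:ℝ))) t :=
    (hasDerivAt_id t).prodMk (hasDerivAt_const t r)
  have h : HasDerivAt (fun s : ℝ => Function.uncurry u (s, r))
      (fderiv ℝ (Function.uncurry u) (t, r) (1, 0)) t :=
    by have h := (hasFDerivAt_of_mem hf (by exact hr : 2*M < ((t, r) : ℝ × ℝ).2)).comp_hasDerivAt t hc; exact h
  exact h.deriv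

lemma pdr_eq {u : ℝ → ℝ → ℝ}
    (hf : ContDiffOn ℝ ∞ (Function.uncurry u) ((Set.univ : Set ℝ) ×ˢ Set.Ioi (2*M)))
    {t r : ℝ} (hr : 2*M < r) :
    pdr u t r = fderiv ℝ (Function.uncurry u) (t, r) (0, 1) := by
  have hc : HasDerivAt (fun s : ℝ => ((t, s) : ℝ × ℝ)) (((0:ℝ), (1:ℝ))) r :=
    (hasDerivAt_const r t).prodMk (hasDerivAt_id r)
  have h : HasDerivAt (fun s : ℝ => Function.uncurry u (t, s))
      (fderiv ℝ (Function.uncurry u) (t, r) (0, 1)) r :=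
    by have h := (hasFDerivAt_of_mem hf (by exact hr : 2*M < ((t, r) : ℝ × ℝ).2)).comp_hasDerivAt r hc; exact h
  exact h.deriv

lemma pdtt_eq {u : ℝ → ℝ → ℝ} (hM : 0 < M)
    (hf : ContDiffOn ℝ ∞ (Function.uncurry u) ((Set.univ : Set ℝ) ×ˢ Set.Ioi (2*M)))
    {t r : ℝ} (hr : 2*M < r) :
    pdtt u t r = fderiv ℝ (fderiv ℝ (Function.uncurry u)) (t, r) (1, 0) (1, 0) := by
  have hfun : (fun s : ℝ => pdt u s r)
      = fun s : ℝ => fderiv ℝ (Function.uncurry u) (s, r) (1, 0) :=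
    funext fun s => pdt_eq hf hr
  have hc : HasDerivAt (fun s : ℝ => ((s, r) : ℝ × ℝ)) (((1:ℝ), (0:ℝ))) t :=
    (hasDerivAt_id t).prodMk (hasDerivAt_const t r)
  have h : HasDerivAt (fun s : ℝ => fderiv ℝ (Function.uncurry u) (s, r) (1, 0))
      (fderiv ℝ (fderiv ℝ (Function.uncurry u)) (t, r) (1, 0) (1, 0)) t :=
    by have h := (hasFDerivAt_partial_of_mem hf (by exact hr : 2*M < ((t, r) : ℝ × ℝ).2)
      ((1:ℝ), (0:ℝ))).comp_hasDerivAt t hc; exact h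
  show deriv (fun s : ℝ => pdt u s r) t = _
  rw [hfun, h.deriv]

lemma pdrr_eq {u : ℝ → ℝ → ℝ} (hM : 0 < M)
    (hf : ContDiffOn ℝ ∞ (Function.uncurry u) ((Set.univ : Set ℝ) ×ˢ Set.Ioi (2*M)))
    {t r : ℝ} (hr : 2*M < r) :
    pdrr u t r = fderiv ℝ (fderiv ℝ (Function.uncurry u)) (t, r) (0, 1) (0, 1) := by
  have hfun : (fun s : ℝ => pdr u t s)
      =ᶠ[nhds r] fun s : ℝ => fderiv ℝ (Function.uncurry u) (t, s) (0, 1) := by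
    filter_upwards [Ioi_mem_nhds hr] with s hs
    exact pdr_eq hf hs
  have hc : HasDerivAt (fun s : ℝ => ((t, s) : ℝ × ℝ)) (((0:ℝ), (1:ℝ))) r :=
    (hasDerivAt_const r t).prodMk (hasDerivAt_id r)
  have h : HasDerivAt (fun s : ℝ => fderiv ℝ (Function.uncurry u) (t, s) (0, 1))
      (fderiv ℝ (fderiv ℝ (Function.uncurry u)) (t, r) (0, 1) (0, 1)) r :=
    by have h := (hasFDerivAt_partial_of_mem hf (by exact hr : 2*M < ((t, r) : ℝ × ℝ).2)
      ((0:ℝ), (1:ℝ))).comp_hasDerivAt r hc; exact h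
  show deriv (fun s : ℝ => pdr u t s) r = _
  rw [hfun.deriv_eq, h.deriv]

end TauPd

set_option maxHeartbeats 1000000 in
lemma pointwise_equiv (M lam : ℝ) (hM : 0 < M) (u : ℝ → ℝ → ℝ)
    (hu : ContDiffOn ℝ ∞ (Function.uncurry u) ((Set.univ : Set ℝ) ×ˢ Set.Ioi (2*M)))
    (τ : ℝ) {ρ : ℝ} (hρ : ρ ∈ Set.Ioo 0 (1/(2*M))) :
    NullInftyEqAt M lam (nullV M u) τ ρ ↔
      (-(ρ⁻¹/(ρ⁻¹-2*M)) * pdtt u (τ + rstar M ρ⁻¹) ρ⁻¹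
        + ((ρ⁻¹-2*M)/ρ⁻¹) * pdrr u (τ + rstar M ρ⁻¹) ρ⁻¹
        + (2*(ρ⁻¹-M)/ρ⁻¹^2) * pdr u (τ + rstar M ρ⁻¹) ρ⁻¹
        - lam^2/ρ⁻¹^2 * u (τ + rstar M ρ⁻¹) ρ⁻¹ = 0) := by
  have hρ0 : ρ ≠ 0 := ne_of_gt hρ.1
  have hD : 2*M < ρ⁻¹ := inv_mem_Ioi hM hρ
  have hD0 : ρ⁻¹ - 2*M ≠ 0 := sub_ne_zero.mpr (ne_of_gt hD)
  have hx : 2*M < ((τ + rstar M ρ⁻¹, ρ⁻¹) : ℝ × ℝ).2 := hD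
  have h2 : (1:ℝ) - ρ*M*2 ≠ 0 := by
    have : 2*M*ρ < 1 := by
      have h := hρ.2
      rw [lt_div_iff₀ (by linarith : (0:ℝ) < 2*M)] at h
      nlinarith
    intro hc; nlinarith
  -- first-order ρ-derivative
  have hD3 : deriv (fun p => nullV M u τ p) ρ = vr M (Function.uncurry u) τ ρ :=
    (hasDerivAt_V hM hu τ hρ).deriv
  -- second-order ρ-derivative
  have h1 : (fun p => deriv (fun q => nullV M u τ q) p)
      =ᶠ[nhds ρ] (fun p => vr M (Function.uncurry u) τ p) := by
    filter_upwards [Ioo_mem_nhds hρ.1 hρ.2] with p hp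
    exact (hasDerivAt_V hM hu τ hp).deriv
  have hD2 := (h1.deriv_eq).trans (deriv_vr hM hu τ hρ)
  -- mixed derivative
  have h2fun : (fun s => deriv (fun p => nullV M u s p) ρ)
      = fun s => vr M (Function.uncurry u) s ρ :=
    funext fun s => (hasDerivAt_V hM hu s hρ).deriv
  have hD1 : deriv (fun s => deriv (fun p => nullV M u s p) ρ) τ
      = -(ρ⁻¹^2) * fderiv ℝ (Function.uncurry u) (τ + rstar M ρ⁻¹, ρ⁻¹) (1, 0)
      - ρ⁻¹^4/(ρ⁻¹-2*M)
          * fderiv ℝ (fderiv ℝ (Function.uncurry u)) (τ + rstar M ρ⁻¹, ρ⁻¹) (1, 0) (1, 0)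
      - ρ⁻¹^3 * fderiv ℝ (fderiv ℝ (Function.uncurry u)) (τ + rstar M ρ⁻¹, ρ⁻¹) (1, 0) (0, 1) := by
    rw [h2fun]
    exact deriv_vr_tau hM hu τ hρ
  have hsym : fderiv ℝ (fderiv ℝ (Function.uncurry u)) (τ + rstar M ρ⁻¹, ρ⁻¹) (0, 1) (1, 0)
      = fderiv ℝ (fderiv ℝ (Function.uncurry u)) (τ + rstar M ρ⁻¹, ρ⁻¹) (1, 0) (0, 1) :=
    symm_snd_of_mem hu hx _ _
  have hV : nullV M u τ ρ = ρ⁻¹ * u (τ + rstar M ρ⁻¹) ρ⁻¹ := by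
    simp only [nullV, one_div]
  simp only [NullInftyEqAt]
  rw [hD1, hD2, hD3, hV, pdtt_eq hM hu hD, pdrr_eq hM hu hD, pdr_eq hu hD, vr, hsym]
  simp only [Function.uncurry_apply_pair]
  set t0 := τ + rstar M ρ⁻¹ with ht0
  set u0 := u t0 ρ⁻¹ with hu0
  set a1 := fderiv ℝ (Function.uncurry u) (t0, ρ⁻¹) (1, 0) with ha1
  set a2 := fderiv ℝ (Function.uncurry u) (t0, ρ⁻¹) (0, 1) with ha2
  set b11 := fderiv ℝ (fderiv ℝ (Function.uncurry u)) (t0, ρ⁻¹) (1, 0) (1, 0) with hb11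
  set b21 := fderiv ℝ (fderiv ℝ (Function.uncurry u)) (t0, ρ⁻¹) (1, 0) (0, 1) with hb21
  set b22 := fderiv ℝ (fderiv ℝ (Function.uncurry u)) (t0, ρ⁻¹) (0, 1) (0, 1) with hb22
  have key :
      2 * (-(ρ⁻¹^2) * a1 - ρ⁻¹^4/(ρ⁻¹-2*M) * b11 - ρ⁻¹^3 * b21)
      + (1 - 2*M*ρ) * (ρ^2 *
          (2*ρ⁻¹^3 * u0
            + 2*ρ⁻¹^5*(2*ρ⁻¹ - 5*M)/(ρ⁻¹-2*M)^2 * a1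
            + 4*ρ⁻¹^4 * a2
            + ρ⁻¹^7/(ρ⁻¹-2*M)^2 * b11
            + ρ⁻¹^6/(ρ⁻¹-2*M) * b21
            + ρ⁻¹^6/(ρ⁻¹-2*M) * b21
            + ρ⁻¹^5 * b22)
        + ρ * (-(ρ^2)⁻¹ * u0 +
            ρ⁻¹ * ((1 + 2*M * (ρ⁻¹ - 2*M)⁻¹) * -(ρ^2)⁻¹ * a1 + -(ρ^2)⁻¹ * a2)))
      + (1 - 4*M*ρ) * ρ * (-(ρ^2)⁻¹ * u0 +
            ρ⁻¹ * ((1 + 2*M * (ρ⁻¹ - 2*M)⁻¹) * -(ρ^2)⁻¹ * a1 + -(ρ^2)⁻¹ * a2))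
      - lam^2 * (ρ⁻¹ * u0) - 2*M*ρ * (ρ⁻¹ * u0)
      = ρ⁻¹^3 * (-(ρ⁻¹/(ρ⁻¹-2*M)) * b11 + ((ρ⁻¹-2*M)/ρ⁻¹) * b22
          + (2*(ρ⁻¹-M)/ρ⁻¹^2) * a2 - lam^2/ρ⁻¹^2 * u0) := by
    have hrw : ρ⁻¹ - 2*M = (1 - ρ*M*2)/ρ := by field_simp
    generalize hd : ρ⁻¹ - 2*M = d at hD0 ⊢
    have hMd : M = (ρ⁻¹ - d)/2 := by linarith
    subst hMd
    field_simp
    ring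
  rw [key, mul_eq_zero, or_iff_right (pow_ne_zero 3 (inv_ne_zero hρ0))]

/-- The conformal transformation of the λ-mode wave equation: a smooth `u` on
`ℝ × (2M,∞)` satisfies the λ-mode Schwarzschild wave equation iff the rescaled function
`V = ρ̄^{-1}·u` in outgoing coordinates satisfies the conformally transformed equation
on `ℝ × (0, 1/(2M))`. -/
theorem mode_equation_conformal_equivalence
    (M lam : ℝ) (hM : 0 < M) (hlam : 0 ≤ lam)
    (u : ℝ → ℝ → ℝ)
    (hu : ContDiffOn ℝ ∞ (Function.uncurry u) ((Set.univ : Set ℝ) ×ˢ Set.Ioi (2*M))) :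
    (∀ t r : ℝ, 2*M < r →
      -(r/(r-2*M)) * pdtt u t r + ((r-2*M)/r) * pdrr u t r
        + (2*(r-M)/r^2) * pdr u t r - lam^2/r^2 * u t r = 0) ↔
    (∀ τ ρ : ℝ, ρ ∈ Set.Ioo 0 (1/(2*M)) → NullInftyEqAt M lam (nullV M u) τ ρ) := by
  constructor
  · intro h τ ρ hρ
    exact (pointwise_equiv M lam hM u hu τ hρ).mpr
      (h (τ + rstar M ρ⁻¹) ρ⁻¹ (inv_mem_Ioi hM hρ))
  · intro h t r hr
    have hr0 : 0 < r := lt_trans (by linarith) hr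
    have hρ : r⁻¹ ∈ Set.Ioo 0 (1/(2*M)) := by
      constructor
      · exact inv_pos.mpr hr0
      · rw [one_div]
        exact inv_strictAnti₀ (by linarith) hr
    have hpt := (pointwise_equiv M lam hM u hu (t - rstar M r) hρ).mp (h (t - rstar M r) r⁻¹ hρ)
    rw [inv_inv, sub_add_cancel] at hpt
    exact hpt
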